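/- In the girth-4 setting: every vertex of T₂ is adjacent to at most one vertex of T₀. -/

import Mathlib

/-- The adjacency matrix of a simple graph over `ℝ` is Hermitian. -/
lemma adjMatrix_isHermitian {V : Type*} [Fintype V] (G : SimpleGraph V)
    [DecidableRel G.Adj] : ((G.adjMatrix ℝ)).IsHermitian := by
  rw [Matrix.IsHermitian, Matrix.conjTranspose_eq_transpose_of_trivial]
  exact G.isSymm_adjMatrix

/-- The number of eigenvalues (counted with multiplicity) of the real adjacency matrix of `G`
satisfying the predicate `p`. -/
noncomputable def eigCount {V : Type*} [Fintype V] [DecidableEq V]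
    (G : SimpleGraph V) (p : ℝ → Prop) : ℕ := by
  classical
  exact (Finset.univ.filter fun i =>
    p ((adjMatrix_isHermitian G).eigenvalues i)).card
/-- `HasMinor G H` : `H` is a minor of `G`, witnessed by a family of pairwise disjoint
nonempty branch sets, each inducing a connected subgraph of `G`, such that every edge of `H`
is realized by an edge of `G` between the corresponding branch sets. -/
def HasMinor {V : Type*} {W : Type*} (G : SimpleGraph V) (H : SimpleGraph W) : Prop :=
  ∃ B : W → Set V,
    (∀ w, (B w).Nonempty) ∧
    (Pairwise fun w₁ w₂ => Disjoint (B w₁) (B w₂)) ∧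
    (∀ w, (G.induce (B w)).Connected) ∧
    (∀ ⦃w₁ w₂⦄, H.Adj w₁ w₂ → ∃ a ∈ B w₁, ∃ b ∈ B w₂, G.Adj a b)

/-- `G` is planar in the sense of Wagner: it has neither `K₅` nor `K_{3,3}` as a minor. -/
def WagnerPlanar {V : Type*} (G : SimpleGraph V) : Prop :=
  ¬ HasMinor G (⊤ : SimpleGraph (Fin 5)) ∧
    ¬ HasMinor G (completeBipartiteGraph (Fin 3) (Fin 3))
/-- For a 4-cycle `x₀x₁x₂x₃x₀` in `G` and `S ⊆ Fin 4`, the set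
`T_S = {v ∉ {x₀,x₁,x₂,x₃} : N(v) ∩ {x₀,x₁,x₂,x₃} = {x i : i ∈ S}}`. -/
def TS {V : Type*} (G : SimpleGraph V) (x : Fin 4 → V) (S : Set (Fin 4)) : Set V :=
  {v | v ∉ Set.range x ∧ ∀ i, G.Adj v (x i) ↔ i ∈ S}

/-- The set `T_j` of vertices outside the 4-cycle having exactly `j` neighbors among
`{x₀,x₁,x₂,x₃}`. -/
def Tdeg {V : Type*} (G : SimpleGraph V) (x : Fin 4 → V) (j : ℕ) : Set V :=
  {v | v ∉ Set.range x ∧ {i : Fin 4 | G.Adj v (x i)}.ncard = j}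

/-! ### Auxiliary material for the proof -/

namespace Stmt13Aux

open Matrix Finset

/-- If a symmetric real matrix admits a two-parameter family of vectors on which the
quadratic form strictly exceeds the squared norm, then it has at least two eigenvalues
greater than `1`. -/
lemma two_le_card_eig {V : Type*} [Fintype V] [DecidableEq V] (A : Matrix V V ℝ)
    (hA : A.IsHermitian) (y₁ y₂ : V → ℝ)
    (h : ∀ s t : ℝ, ¬(s = 0 ∧ t = 0) →
      ∑ a, (s * y₁ a + t * y₂ a) * (s * y₁ a + t * y₂ a)
        < (fun a => s * y₁ a + t * y₂ a) ⬝ᵥ (A *ᵥ fun a => s * y₁ a + t * y₂ a)) :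
    2 ≤ (Finset.univ.filter fun i => 1 < hA.eigenvalues i).card := by
  classical
  rcases isEmpty_or_nonempty V with hV | hV
  · exfalso
    have := h 1 0 (by simp)
    simp [dotProduct] at this
  by_contra hc
  push_neg at hc
  obtain ⟨i₀, hsub⟩ := Finset.card_le_one_iff_subset_singleton.mp
    (show (Finset.univ.filter fun i => 1 < hA.eigenvalues i).card ≤ 1 by omega)
  have hle : ∀ i, i ≠ i₀ → hA.eigenvalues i ≤ 1 := by
    intro i hi
    by_contra hgt
    push_neg at hgt
    exact hi (Finset.mem_singleton.mp (hsub (Finset.mem_filter.mpr ⟨Finset.mem_univ _, hgt⟩)))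
  have hds : ∀ (u : V → ℝ) (g : V → V → ℝ), u ⬝ᵥ (∑ i, g i) = ∑ i, u ⬝ᵥ g i := by
    intro u g
    simp only [dotProduct, Finset.sum_apply, Finset.mul_sum]
    exact Finset.sum_comm
  have hms : ∀ (g : V → V → ℝ), A *ᵥ (∑ i, g i) = ∑ i, A *ᵥ g i := by
    intro g
    ext a
    simp only [Matrix.mulVec, dotProduct, Finset.sum_apply, Finset.mul_sum]
    exact Finset.sum_comm
  set e : V → V → ℝ := fun i => ⇑(hA.eigenvectorBasis i) with he
  have hAe : ∀ i, A *ᵥ e i = hA.eigenvalues i • e i := fun i => hA.mulVec_eigenvectorBasis i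
  have horth : ∀ i j, e i ⬝ᵥ e j = if i = j then 1 else 0 := by
    intro i j
    have := orthonormal_iff_ite.mp hA.eigenvectorBasis.orthonormal i j
    simp only [dotProduct, he]
    simpa [PiLp.inner_apply, RCLike.inner_apply, starRingEnd_apply, mul_comm] using this
  set α := e i₀ ⬝ᵥ y₁ with hα'
  set β := e i₀ ⬝ᵥ y₂ with hβ'
  obtain ⟨s, t, hst, hzero⟩ : ∃ s t : ℝ, ¬(s = 0 ∧ t = 0) ∧ s * α + t * β = 0 := by
    by_cases hα : α = 0
    · exact ⟨1, 0, by simp, by simp [hα]⟩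
    · exact ⟨β, -α, by simp [hα], by ring⟩
  set z : V → ℝ := fun a => s * y₁ a + t * y₂ a with hzdef
  have hz := h s t hst
  set c : V → ℝ := fun i => e i ⬝ᵥ z with hc'
  have hci₀ : c i₀ = 0 := by
    have h2 : e i₀ ⬝ᵥ z = s * α + t * β := by
      simp only [hzdef, hα', hβ', dotProduct, mul_add, Finset.sum_add_distrib, Finset.mul_sum]
      congr 1 <;> exact Finset.sum_congr rfl fun _ _ => by ring
    simp only [hc', h2, hzero]
  have hrepr : z = ∑ i, c i • e i := by
    have h0 := hA.eigenvectorBasis.sum_repr' ((WithLp.equiv 2 (V → ℝ)).symm z)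
    have h1 : ∀ i, (inner (𝕜 := ℝ) (hA.eigenvectorBasis i)
        ((WithLp.equiv 2 (V → ℝ)).symm z)) = c i := by
      intro i
      simp [PiLp.inner_apply, hc', dotProduct, he, mul_comm]
    calc z = WithLp.equiv 2 (V → ℝ) ((WithLp.equiv 2 (V → ℝ)).symm z) := rfl
    _ = WithLp.equiv 2 (V → ℝ) (∑ i, (inner (𝕜 := ℝ) (hA.eigenvectorBasis i)
          ((WithLp.equiv 2 (V → ℝ)).symm z)) • hA.eigenvectorBasis i) := by rw [h0]
    _ = ∑ i, c i • e i := by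
        simp only [h1]
        simp [he]
  have hAz : A *ᵥ z = ∑ i, (c i * hA.eigenvalues i) • e i := by
    rw [hrepr, hms]
    refine Finset.sum_congr rfl fun i _ => ?_
    rw [Matrix.mulVec_smul, hAe i, smul_smul]
  have hnorm : ∑ a, z a * z a = ∑ i, c i * c i := by
    have h3 : ∑ a, z a * z a = z ⬝ᵥ z := rfl
    rw [h3]
    nth_rewrite 2 [hrepr]
    rw [hds]
    refine Finset.sum_congr rfl fun i _ => ?_
    rw [dotProduct_smul, smul_eq_mul, dotProduct_comm]
  have hquad : z ⬝ᵥ (A *ᵥ z) = ∑ i, hA.eigenvalues i * (c i * c i) := by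
    rw [hAz, hds]
    refine Finset.sum_congr rfl fun i _ => ?_
    rw [dotProduct_smul, smul_eq_mul, dotProduct_comm]
    rw [hc']
    ring
  have hbound : ∑ i, hA.eigenvalues i * (c i * c i) ≤ ∑ i, c i * c i := by
    refine Finset.sum_le_sum fun i _ => ?_
    rcases eq_or_ne i i₀ with rfl | hi
    · simp [hci₀]
    · have h1 := hle i hi
      nlinarith [mul_self_nonneg (c i)]
  rw [hnorm] at hz
  rw [show ((fun a => s * y₁ a + t * y₂ a) ⬝ᵥ (A *ᵥ fun a => s * y₁ a + t * y₂ a))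
    = z ⬝ᵥ (A *ᵥ z) from rfl, hquad] at hz
  exact absurd hz (not_lt.mpr hbound)

noncomputable def c1V : Fin 7 → ℝ := ![8, 6, 8, 6, 9, 3, 3]
noncomputable def c2V : Fin 7 → ℝ := ![8, 15, 8, 15, -21, -19, -19]
noncomputable def Mconc : Matrix (Fin 7) (Fin 7) ℝ :=
  !![0,1,0,1,1,0,0; 1,0,1,0,0,0,0; 0,1,0,1,1,0,0; 1,0,1,0,0,0,0;
     1,0,1,0,0,1,1; 0,0,0,0,1,0,0; 0,0,0,0,1,0,0]

noncomputable def yv {V : Type*} [Fintype V] [DecidableEq V] (p : Fin 7 → V) (c : Fin 7 → ℝ) :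
    V → ℝ := fun q => ∑ k, if q = p k then c k else 0

variable {V : Type*} [Fintype V] [DecidableEq V]

lemma yv_apply (p : Fin 7 → V) (hp : Function.Injective p) (c : Fin 7 → ℝ) (k : Fin 7) :
    yv p c (p k) = c k := by
  simp [yv, hp.eq_iff]

lemma yv_zero (p : Fin 7 → V) (c : Fin 7 → ℝ) (q : V) (hq : ∀ k, q ≠ p k) :
    yv p c q = 0 := by
  simp only [yv]
  exact Finset.sum_eq_zero fun k _ => by rw [if_neg (hq k)]

lemma sum_support (p : Fin 7 → V) (hp : Function.Injective p) (g : V → ℝ)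
    (hg : ∀ q, (∀ k, q ≠ p k) → g q = 0) : ∑ q, g q = ∑ k, g (p k) := by
  rw [show ∑ k, g (p k) = ∑ q ∈ Finset.univ.image p, g q from
    (Finset.sum_image fun a _ b _ hab => hp hab).symm]
  refine (Finset.sum_subset (Finset.subset_univ _) ?_).symm
  intro q _ hq
  refine hg q fun k hk => hq ?_
  exact Finset.mem_image.mpr ⟨k, Finset.mem_univ _, hk.symm⟩

lemma yv_dot (p : Fin 7 → V) (hp : Function.Injective p) (c : Fin 7 → ℝ) :
    ∑ a, yv p c a * yv p c a = ∑ k, c k * c k := by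
  rw [sum_support p hp _ (fun q hq => by rw [yv_zero p c q hq, zero_mul])]
  exact Finset.sum_congr rfl fun k _ => by rw [yv_apply p hp]

lemma yv_quad (A : Matrix V V ℝ) (p : Fin 7 → V) (hp : Function.Injective p)
    (hadj : ∀ k l, A (p k) (p l) = Mconc k l) (c : Fin 7 → ℝ) :
    yv p c ⬝ᵥ (A *ᵥ yv p c) = ∑ k, ∑ l, c k * (Mconc k l * c l) := by
  have houter : yv p c ⬝ᵥ (A *ᵥ yv p c) = ∑ k, c k * (A *ᵥ yv p c) (p k) := by
    rw [show yv p c ⬝ᵥ (A *ᵥ yv p c) = ∑ q, yv p c q * (A *ᵥ yv p c) q from rfl]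
    rw [sum_support p hp _ (fun q hq => by rw [yv_zero p c q hq, zero_mul])]
    exact Finset.sum_congr rfl fun k _ => by rw [yv_apply p hp]
  rw [houter]
  refine Finset.sum_congr rfl fun k _ => ?_
  have hinner : (A *ᵥ yv p c) (p k) = ∑ l, Mconc k l * c l := by
    rw [show (A *ᵥ yv p c) (p k) = ∑ q, A (p k) q * yv p c q from rfl]
    rw [sum_support p hp _ (fun q hq => by rw [yv_zero p c q hq, mul_zero])]
    exact Finset.sum_congr rfl fun l _ => by rw [yv_apply p hp, hadj]
  rw [hinner, Finset.mul_sum]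

lemma yv_comb (p : Fin 7 → V) (c d : Fin 7 → ℝ) (s t : ℝ) (a : V) :
    s * yv p c a + t * yv p d a = yv p (fun k => s * c k + t * d k) a := by
  simp only [yv, Finset.mul_sum, ← Finset.sum_add_distrib]
  exact Finset.sum_congr rfl fun k _ => by split_ifs <;> ring

lemma certify (A : Matrix V V ℝ) (p : Fin 7 → V) (hp : Function.Injective p)
    (hadj : ∀ k l, A (p k) (p l) = Mconc k l) (s t : ℝ) (hst : ¬(s = 0 ∧ t = 0)) :
    ∑ a, (s * yv p c1V a + t * yv p c2V a) * (s * yv p c1V a + t * yv p c2V a)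
      < (fun a => s * yv p c1V a + t * yv p c2V a)
          ⬝ᵥ (A *ᵥ fun a => s * yv p c1V a + t * yv p c2V a) := by
  simp only [yv_comb p c1V c2V s t]
  rw [yv_quad A p hp hadj, yv_dot p hp]
  have hexp1 : ∑ k, (s * c1V k + t * c2V k) * (s * c1V k + t * c2V k)
      = 299 * s ^ 2 + 10 * (s * t) + 1741 * t ^ 2 := by
    simp [Fin.sum_univ_succ, c1V, c2V]
    ring
  have hexp2 : ∑ k, ∑ l, (s * c1V k + t * c2V k) * (Mconc k l * (s * c1V l + t * c2V l))
      = 780 * s ^ 2 + 24 * (s * t) + 1884 * t ^ 2 := by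
    simp [Fin.sum_univ_succ, c1V, c2V, Mconc]
    ring
  rw [hexp1, hexp2]
  rcases not_and_or.mp hst with hs | ht
  · nlinarith [sq_nonneg (7 * s + t), sq_nonneg t, mul_self_pos.mpr hs]
  · nlinarith [sq_nonneg (7 * s + t), sq_nonneg s, mul_self_pos.mpr ht]

end Stmt13Aux

set_option maxHeartbeats 2000000 in
open Matrix Stmt13Aux in
/-- in the girth-4 setting, every vertex of `T₂` is adjacent to at most one
vertex of `T₀`. -/
theorem girth_four_T2_at_most_one_T0_nbr {V : Type*} [Fintype V] [DecidableEq V] (G : SimpleGraph V)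
    (hconn : G.Connected) (htf : G.CliqueFree 3)
    (hl : eigCount G (fun t => 1 < t) ≤ 1) (hplanar : WagnerPlanar G)
    (hgirth : G.egirth = 4) (x : Fin 4 → V) (hinj : Function.Injective x)
    (hcyc : ∀ i, G.Adj (x i) (x (i + 1))) :
    ∀ v ∈ Tdeg G x 2, ∀ u ∈ Tdeg G x 0, ∀ w ∈ Tdeg G x 0,
      G.Adj v u → G.Adj v w → u = w := by
  classical
  intro v hv u hu w hw hvu hvw
  by_contra hne
  obtain ⟨hvr, hv2⟩ := hv
  obtain ⟨hur, hu0⟩ := hu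
  obtain ⟨hwr, hw0⟩ := hw
  have htri : ∀ {a b c : V}, G.Adj a b → G.Adj a c → G.Adj b c → False := by
    intro a b c hab hac hbc
    exact htf {a, b, c} (SimpleGraph.is3Clique_triple_iff.mpr ⟨hab, hac, hbc⟩)
  have hux : ∀ k, ¬ G.Adj u (x k) := by
    have h0 := (Set.ncard_eq_zero (Set.toFinite _)).mp hu0
    intro k hk
    exact absurd (h0 ▸ (hk : k ∈ {i : Fin 4 | G.Adj u (x i)}) : k ∈ (∅ : Set (Fin 4))) (Set.notMem_empty k)
  have hwx : ∀ k, ¬ G.Adj w (x k) := by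
    have h0 := (Set.ncard_eq_zero (Set.toFinite _)).mp hw0
    intro k hk
    exact absurd (h0 ▸ (hk : k ∈ {i : Fin 4 | G.Adj w (x i)}) : k ∈ (∅ : Set (Fin 4))) (Set.notMem_empty k)
  obtain ⟨i, j, hij, hset⟩ := Set.ncard_eq_two.mp hv2
  have hvx : ∀ k, G.Adj v (x k) ↔ (k = i ∨ k = j) := by
    intro k
    have := Set.ext_iff.mp hset k
    simpa using this
  have hopp : j = i + 2 := by
    have hfin : ∀ a b : Fin 4, a ≠ b → b = a + 1 ∨ b = a + 2 ∨ a = b + 1 := by decide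
    rcases hfin i j hij with h1 | h2 | h3
    · exact absurd (show G.Adj (x i) (x j) by rw [h1]; exact hcyc i)
        (fun hadj => htri ((hvx i).mpr (Or.inl rfl)) ((hvx j).mpr (Or.inr rfl)) hadj)
    · exact h2
    · exact absurd (show G.Adj (x j) (x i) by rw [h3]; exact hcyc j)
        (fun hadj => htri ((hvx j).mpr (Or.inr rfl)) ((hvx i).mpr (Or.inl rfl)) hadj)
  subst hopp
  have e2 : ∀ a : Fin 4, a + 1 + 1 = a + 2 := by decide
  have e3 : ∀ a : Fin 4, a + 2 + 1 = a + 3 := by decide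
  have e4 : ∀ a : Fin 4, a + 3 + 1 = a := by decide
  have hc01 : G.Adj (x i) (x (i+1)) := hcyc i
  have hc12 : G.Adj (x (i+1)) (x (i+2)) := by have := hcyc (i+1); rwa [e2] at this
  have hc23 : G.Adj (x (i+2)) (x (i+3)) := by have := hcyc (i+2); rwa [e3] at this
  have hc30 : G.Adj (x (i+3)) (x i) := by have := hcyc (i+3); rwa [e4] at this
  have hv0 : G.Adj v (x i) := (hvx i).mpr (Or.inl rfl)
  have hv2' : G.Adj v (x (i+2)) := (hvx (i+2)).mpr (Or.inr rfl)
  have hvn1 : ¬ G.Adj v (x (i+1)) := by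
    rw [hvx]
    have hh : ∀ a : Fin 4, ¬(a + 1 = a ∨ a + 1 = a + 2) := by decide
    exact hh i
  have hvn3 : ¬ G.Adj v (x (i+3)) := by
    rw [hvx]
    have hh : ∀ a : Fin 4, ¬(a + 3 = a ∨ a + 3 = a + 2) := by decide
    exact hh i
  have hx02 : ¬ G.Adj (x i) (x (i+2)) := fun h => htri hc01 h hc12
  have hx13 : ¬ G.Adj (x (i+1)) (x (i+3)) := fun h => htri hc12 h hc23
  have huw : ¬ G.Adj u w := fun h => htri hvu hvw h
  have hxv : ∀ k : Fin 4, x k ≠ v := fun k h => hvr ⟨k, h⟩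
  have hxu : ∀ k : Fin 4, x k ≠ u := fun k h => hur ⟨k, h⟩
  have hxw : ∀ k : Fin 4, x k ≠ w := fun k h => hwr ⟨k, h⟩
  have hvu' : v ≠ u := G.ne_of_adj hvu
  have hvw' : v ≠ w := G.ne_of_adj hvw
  have idx : ∀ a : Fin 4, a ≠ a + 1 ∧ a ≠ a + 2 ∧ a ≠ a + 3 ∧ a + 1 ≠ a + 2 ∧
      a + 1 ≠ a + 3 ∧ a + 2 ≠ a + 3 := by decide
  have d01 : x i ≠ x (i+1) := hinj.ne (idx i).1
  have d02 : x i ≠ x (i+2) := hinj.ne (idx i).2.1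
  have d03 : x i ≠ x (i+3) := hinj.ne (idx i).2.2.1
  have d12 : x (i+1) ≠ x (i+2) := hinj.ne (idx i).2.2.2.1
  have d13 : x (i+1) ≠ x (i+3) := hinj.ne (idx i).2.2.2.2.1
  have d23 : x (i+2) ≠ x (i+3) := hinj.ne (idx i).2.2.2.2.2
  set p : Fin 7 → V := ![x i, x (i+1), x (i+2), x (i+3), v, u, w] with hpdef
  have hp : Function.Injective p := by
    intro a b hab
    fin_cases a <;> fin_cases b <;>
      simp only [hpdef, Matrix.cons_val_zero, Matrix.cons_val_one, Matrix.head_cons,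
        Matrix.cons_val_two, Matrix.cons_val_three, Matrix.cons_val_four, Matrix.tail_cons,
        Matrix.cons_val_fin_one, Matrix.cons_val_succ, Fin.isValue] at hab <;>
      first
        | rfl
        | (exact absurd hab (by
            first
              | exact d01 | exact d02 | exact d03 | exact d12 | exact d13 | exact d23
              | exact d01.symm | exact d02.symm | exact d03.symm | exact d12.symm
              | exact d13.symm | exact d23.symm
              | exact hxv _ | exact hxu _ | exact hxw _
              | exact fun h => hxv _ h.symm
              | exact fun h => hxu _ h.symm
              | exact fun h => hxw _ h.symm
              | exact hvu' | exact hvw' | exact hne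
              | exact Ne.symm hvu' | exact Ne.symm hvw' | exact Ne.symm hne))
  have hadj : ∀ k l, (G.adjMatrix ℝ) (p k) (p l) = Mconc k l := by
    have hux' : ∀ k, ¬ G.Adj (x k) u := fun k h => hux k h.symm
    have hwx' : ∀ k, ¬ G.Adj (x k) w := fun k h => hwx k h.symm
    have hx02' : ¬ G.Adj (x (i+2)) (x i) := fun h => hx02 h.symm
    have hx13' : ¬ G.Adj (x (i+3)) (x (i+1)) := fun h => hx13 h.symm
    have hvn1' : ¬ G.Adj (x (i+1)) v := fun h => hvn1 h.symm
    have hvn3' : ¬ G.Adj (x (i+3)) v := fun h => hvn3 h.symm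
    have huw' : ¬ G.Adj w u := fun h => huw h.symm
    intro k l
    fin_cases k <;> fin_cases l <;>
      first
        | exact if_pos hc01 | exact if_pos hc01.symm
        | exact if_pos hc12 | exact if_pos hc12.symm
        | exact if_pos hc23 | exact if_pos hc23.symm
        | exact if_pos hc30 | exact if_pos hc30.symm
        | exact if_pos hv0 | exact if_pos hv0.symm
        | exact if_pos hv2' | exact if_pos hv2'.symm
        | exact if_pos hvu | exact if_pos hvu.symm
        | exact if_pos hvw | exact if_pos hvw.symm
        | exact if_neg (G.irrefl)
        | exact if_neg hx02 | exact if_neg hx02'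
        | exact if_neg hx13 | exact if_neg hx13'
        | exact if_neg hvn1 | exact if_neg hvn1'
        | exact if_neg hvn3 | exact if_neg hvn3'
        | exact if_neg huw | exact if_neg huw'
        | exact if_neg (hux _) | exact if_neg (hux' _)
        | exact if_neg (hwx _) | exact if_neg (hwx' _)
  have hkey : ∀ s t : ℝ, ¬(s = 0 ∧ t = 0) →
      ∑ a, (s * yv p c1V a + t * yv p c2V a) * (s * yv p c1V a + t * yv p c2V a)
        < (fun a => s * yv p c1V a + t * yv p c2V a)
            ⬝ᵥ ((G.adjMatrix ℝ) *ᵥ fun a => s * yv p c1V a + t * yv p c2V a) :=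
    fun s t hst => certify (G.adjMatrix ℝ) p hp hadj s t hst
  have h2 : 2 ≤ eigCount G (fun t => 1 < t) := by
    unfold eigCount
    exact two_le_card_eig (G.adjMatrix ℝ) (adjMatrix_isHermitian G) (yv p c1V) (yv p c2V) hkey
  omega
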